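/- arXiv:2403.06080 — 2 statements merged into one kernel-verified Lean document; each statement's English description precedes it below -/
import Mathlib

section
/- A vertex u of a connected undirected graph lies on a cycle if and only if, for every DFS spanning tree T of the graph, u is covered by at least one back edge of T (i.e., u lies on the tree path between the two endpoints of some non-tree edge). -/
open SimpleGraph

/-- `w` lies on every path (hence on the unique path, if `T` is a tree)
from `r` to `u` in `T`. -/
def IsAncestor {V : Type*} (T : SimpleGraph V) (r w u : V) : Prop :=
  ∀ p : T.Walk r u, p.IsPath → w ∈ p.support

/-- `u` lies on every path (hence on the unique tree path) between `a` and `b` in `T`. -/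
def OnTreePath {V : Type*} (T : SimpleGraph V) (a b u : V) : Prop :=
  ∀ p : T.Walk a b, p.IsPath → u ∈ p.support

/-- `T` is a DFS spanning tree of `G` rooted at `r`: a spanning tree in which every
non-tree edge joins a vertex to one of its ancestors. -/
def IsDFSTree {V : Type*} (G T : SimpleGraph V) (r : V) : Prop :=
  T ≤ G ∧ T.IsTree ∧
    ∀ a b, G.Adj a b → ¬ T.Adj a b → IsAncestor T r a b ∨ IsAncestor T r b a

/-- `u` is covered by at least one back edge of `T`: it lies on the tree path between the
endpoints of some non-tree edge of `G`. -/
def CoveredByBackEdge {V : Type*} (G T : SimpleGraph V) (u : V) : Prop :=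
  ∃ a b, G.Adj a b ∧ ¬ T.Adj a b ∧ OnTreePath T a b u

section Helpers

variable {V : Type*}

lemma memOfGetLast? {α : Type*} {l : List α} {a : α} (h : l.getLast? = some a) : a ∈ l := by
  obtain ⟨h1, h2⟩ := List.mem_getLast?_eq_getLast (by rw [h]; rfl)
  exact h2 ▸ l.getLast_mem h1

lemma isPathConcat {T : SimpleGraph V} {u v w : V} {p : T.Walk u v} (hp : p.IsPath)
    (h : T.Adj v w) (hw : w ∉ p.support) : (p.concat h).IsPath := by
  rw [← Walk.isPath_reverse_iff, Walk.reverse_concat, Walk.cons_isPath_iff]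
  refine ⟨hp.reverse, ?_⟩
  rw [Walk.support_reverse, List.mem_reverse]
  exact hw

lemma takeUntilPrefix [DecidableEq V] {T : SimpleGraph V} {v w u : V} (p : T.Walk v w)
    (h : u ∈ p.support) : (p.takeUntil u h).support <+: p.support :=
  ⟨(p.dropUntil u h).support.tail, by rw [← Walk.support_append, Walk.take_spec]⟩

/-- Final step of the DFS construction: the stack is empty, so the visited
set is everything. -/
lemma dfs_final [Fintype V] (G : SimpleGraph V) (hG : G.Connected) (r : V)
    (D : Finset V) (pt : V → List V)
    (hr : r ∈ D) (hptr : pt r = [r])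
    (h1 : ∀ v ∈ D, (pt v).Nodup ∧ (pt v).getLast? = some v ∧ ∀ w ∈ pt v, w ∈ D)
    (h2 : ∀ v ∈ D, v ≠ r → ∃ w ∈ D, G.Adj w v ∧ pt v = pt w ++ [v])
    (h3 : ∀ a ∈ D, ∀ b ∈ D, G.Adj a b → pt a <+: pt b ∨ pt b <+: pt a)
    (h4 : ∀ a ∈ D, ∀ b, b ∉ D → ¬ G.Adj a b) :
    ∃ pt' : V → List V, pt' r = [r] ∧
      (∀ v, (pt' v).Nodup ∧ (pt' v).getLast? = some v) ∧
      (∀ v, v ≠ r → ∃ w, G.Adj w v ∧ pt' v = pt' w ++ [v]) ∧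
      (∀ a b, G.Adj a b → pt' a <+: pt' b ∨ pt' b <+: pt' a) := by
  have hall : ∀ v, v ∈ D := by
    intro v
    by_contra hv
    obtain ⟨p⟩ := hG.preconnected r v
    obtain ⟨d, _, hdS, hdnS⟩ := p.exists_boundary_dart (↑D : Set V)
      (by simpa using hr) (by simpa using hv)
    exact h4 d.fst (by simpa using hdS) d.snd (by simpa using hdnS) d.adj
  refine ⟨pt, hptr, fun v => ⟨(h1 v (hall v)).1, (h1 v (hall v)).2.1⟩, ?_, ?_⟩
  · intro v hv
    obtain ⟨w, _, hw⟩ := h2 v (hall v) hv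
    exact ⟨w, hw⟩
  · intro a b hab
    exact h3 a (hall a) b (hall b) hab

lemma dfs_step [Fintype V] [DecidableEq V] (G : SimpleGraph V) (hG : G.Connected) (r : V) :
    ∀ (n : ℕ) (D : Finset V) (stk : List V) (pt : V → List V),
      2 * (Fintype.card V - D.card) + stk.length ≤ n →
      r ∈ D → pt r = [r] →
      (∀ v ∈ D, (pt v).Nodup ∧ (pt v).getLast? = some v ∧ ∀ w ∈ pt v, w ∈ D) →
      (∀ v ∈ D, v ≠ r → ∃ w ∈ D, G.Adj w v ∧ pt v = pt w ++ [v]) →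
      (∀ a ∈ D, ∀ b ∈ D, G.Adj a b → pt a <+: pt b ∨ pt b <+: pt a) →
      (∀ a ∈ D, ∀ b, b ∉ D → G.Adj a b → a ∈ stk) →
      (∀ pre t post, stk = pre ++ t :: post → pt t = (t :: post).reverse) →
      (∀ v ∈ stk, v ∈ D) →
      ∃ pt' : V → List V, pt' r = [r] ∧
        (∀ v, (pt' v).Nodup ∧ (pt' v).getLast? = some v) ∧
        (∀ v, v ≠ r → ∃ w, G.Adj w v ∧ pt' v = pt' w ++ [v]) ∧
        (∀ a b, G.Adj a b → pt' a <+: pt' b ∨ pt' b <+: pt' a) := by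
  intro n
  induction n with
  | zero =>
    intro D stk pt hn hr hptr h1 h2 h3 h4 h5 h6
    have hstk : stk = [] := List.length_eq_zero_iff.mp (by omega)
    subst hstk
    exact dfs_final G hG r D pt hr hptr h1 h2 h3
      (fun a ha b hb hab => by simpa using h4 a ha b hb hab)
  | succ m ih =>
    intro D stk pt hn hr hptr h1 h2 h3 h4 h5 h6
    rcases stk with _ | ⟨t, rest⟩
    · exact dfs_final G hG r D pt hr hptr h1 h2 h3
        (fun a ha b hb hab => by simpa using h4 a ha b hb hab)
    · have htD : t ∈ D := h6 t (List.mem_cons_self)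
      have hptt : pt t = (t :: rest).reverse := h5 [] t rest rfl
      by_cases hy : ∃ y, y ∉ D ∧ G.Adj t y
      · -- push
        obtain ⟨y, hyD, hty⟩ := hy
        set pt' := Function.update pt y (pt t ++ [y]) with hpt'
        have hne : ∀ v ∈ D, v ≠ y := fun v hv h => hyD (h ▸ hv)
        have hupd : ∀ v ∈ D, pt' v = pt v := fun v hv =>
          Function.update_of_ne (hne v hv) _ _
        have hupdy : pt' y = pt t ++ [y] := Function.update_self _ _ _
        have hsubD : ∀ v ∈ D, v ∈ insert y D := fun v hv => Finset.mem_insert_of_mem hv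
        have hcard : (insert y D).card = D.card + 1 := Finset.card_insert_of_notMem hyD
        have hle : (insert y D).card ≤ Fintype.card V := Finset.card_le_univ _
        -- key prefix fact: for b ∈ D adjacent (in G) to y, pt b is a prefix of pt t
        have hkey : ∀ b ∈ D, G.Adj b y → pt b <+: pt t := by
          intro b hb hby
          have hbstk : b ∈ t :: rest := h4 b hb y hyD hby
          obtain ⟨pre, post, hsplit⟩ := List.append_of_mem hbstk
          have hptb : pt b = (b :: post).reverse := h5 pre b post hsplit
          rw [hptt, hsplit, List.reverse_append]
          exact hptb ▸ ⟨pre.reverse, rfl⟩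
        apply ih (insert y D) (y :: t :: rest) pt'
        · simp only [List.length_cons]
          have : D.card < Fintype.card V := by omega
          simp only [List.length_cons] at hn
          omega
        · exact hsubD r hr
        · rw [hupd r hr]; exact hptr
        · intro v hv
          rcases Finset.mem_insert.mp hv with rfl | hv
          · refine ⟨?_, ?_, ?_⟩
            · rw [hupdy]
              have hnd := (h1 t htD).1
              have hyn : v ∉ pt t := fun h => hyD ((h1 t htD).2.2 v h)
              simp [List.nodup_append, hnd, hyn]
              exact fun a ha h => hyn (h ▸ ha)
            · rw [hupdy]; simp
            · rw [hupdy]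
              intro w hw
              rcases List.mem_append.mp hw with hw | hw
              · exact hsubD w ((h1 t htD).2.2 w hw)
              · simp at hw; subst hw; exact Finset.mem_insert_self _ _
          · rw [hupd v hv]
            refine ⟨(h1 v hv).1, (h1 v hv).2.1, fun w hw => hsubD w ((h1 v hv).2.2 w hw)⟩
        · intro v hv hvr
          rcases Finset.mem_insert.mp hv with rfl | hv
          · exact ⟨t, hsubD t htD, hty, by rw [hupdy, hupd t htD]⟩
          · obtain ⟨w, hwD, hwv, heq⟩ := h2 v hv hvr
            exact ⟨w, hsubD w hwD, hwv, by rw [hupd v hv, hupd w hwD]; exact heq⟩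
        · intro a ha b hb hab
          rcases Finset.mem_insert.mp ha with ha' | ha'
          · rcases Finset.mem_insert.mp hb with hb' | hb'
            · have : a = b := ha'.trans hb'.symm
              subst this
              left; exact List.prefix_refl _
            · subst ha'
              right
              rw [hupd b hb', hupdy]
              exact (hkey b hb' hab.symm).trans (List.prefix_append _ _)
          · rcases Finset.mem_insert.mp hb with hb' | hb'
            · subst hb'
              left
              rw [hupd a ha', hupdy]
              exact (hkey a ha' hab).trans (List.prefix_append _ _)
            · rw [hupd a ha', hupd b hb']; exact h3 a ha' b hb' hab
        · intro a ha b hb hab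
          rcases Finset.mem_insert.mp ha with rfl | ha
          · exact List.mem_cons_self
          · exact List.mem_cons_of_mem _ (h4 a ha b (fun h => hb (hsubD b h)) hab)
        · intro pre t' post heq
          rcases pre with _ | ⟨p0, pre'⟩
          · simp only [List.nil_append] at heq
            obtain ⟨rfl, rfl⟩ : y = t' ∧ t :: rest = post := by
              constructor <;> [exact (List.cons.injEq ..▸ heq).1 ▸ rfl; exact (List.cons.injEq ..▸ heq).2 ▸ rfl]
            rw [hupdy]
            simp [hptt]
          · simp only [List.cons_append, List.cons.injEq] at heq
            obtain ⟨rfl, heq2⟩ := heq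
            have ht'stk : t' ∈ t :: rest := by rw [heq2]; simp
            rw [hupd t' (h6 t' ht'stk)]
            exact h5 pre' t' post heq2
        · intro v hv
          rcases List.mem_cons.mp hv with rfl | hv
          · exact Finset.mem_insert_self _ _
          · exact hsubD v (h6 v hv)
      · -- pop
        apply ih D rest pt
        · simp only [List.length_cons] at hn; omega
        · exact hr
        · exact hptr
        · exact h1
        · exact h2
        · exact h3
        · intro a ha b hb hab
          rcases List.mem_cons.mp (h4 a ha b hb hab) with rfl | h
          · exact absurd ⟨b, hb, hab⟩ hy
          · exact h
        · intro pre t' post heq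
          exact h5 (t :: pre) t' post (by rw [heq]; rfl)
        · intro v hv
          exact h6 v (List.mem_cons_of_mem _ hv)

lemma dfs_exists [Fintype V] (G : SimpleGraph V) (hG : G.Connected) (r : V) :
    ∃ pt : V → List V, pt r = [r] ∧
      (∀ v, (pt v).Nodup ∧ (pt v).getLast? = some v) ∧
      (∀ v, v ≠ r → ∃ w, G.Adj w v ∧ pt v = pt w ++ [v]) ∧
      (∀ a b, G.Adj a b → pt a <+: pt b ∨ pt b <+: pt a) := by
  classical
  refine dfs_step G hG r (2 * Fintype.card V + 1) {r} [r]
    (fun v => if v = r then [r] else []) ?_ (Finset.mem_singleton_self r) (by simp)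
    ?_ ?_ ?_ ?_ ?_ ?_
  · have : ({r} : Finset V).card = 1 := rfl
    simp only [this, List.length_singleton]
    omega
  · intro v hv
    rw [Finset.mem_singleton] at hv
    subst hv
    simp
  · intro v hv hvr
    rw [Finset.mem_singleton] at hv
    exact absurd hv hvr
  · intro a ha b hb hab
    rw [Finset.mem_singleton] at ha hb
    subst ha; subst hb
    exact absurd hab G.irrefl
  · intro a ha b hb hab
    rw [Finset.mem_singleton] at ha
    subst ha
    simp
  · intro pre t post heq
    have : pre = [] ∧ t = r ∧ post = [] := by
      rcases pre with _ | ⟨p0, pre'⟩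
      · simp only [List.nil_append, List.cons.injEq] at heq
        exact ⟨rfl, heq.1.symm, heq.2.symm⟩
      · exfalso
        have := congrArg List.length heq
        simp at this
    obtain ⟨rfl, rfl, rfl⟩ := this
    simp
  · intro v hv
    simp at hv
    simp [hv]

end Helpers

/-- A vertex of a connected graph lies on a cycle iff, for every DFS spanning
tree, it is covered by at least one back edge. -/
theorem stmt3 {V : Type*} [Fintype V] (G : SimpleGraph V) (hG : G.Connected) (u : V) :
    (∃ (w : V) (c : G.Walk w w), c.IsCycle ∧ u ∈ c.support) ↔
    (∀ (T : SimpleGraph V) (r : V), IsDFSTree G T r → CoveredByBackEdge G T u) := by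
  classical
  constructor
  · rintro ⟨w0, c, hc, huc⟩ T r ⟨hle, hT, hback⟩
    choose P hP hPu using fun v => hT.existsUnique_path r v
    set s : V → List V := fun v => (P v).support with hs_def
    have hmem_self : ∀ a, a ∈ s a := fun a => (P a).end_mem_support
    have hpre : ∀ a b, a ∈ s b → s a <+: s b := by
      intro a b hab
      have h1 : ((P b).takeUntil a hab).IsPath := (hP b).takeUntil hab
      have h2 := hPu a _ h1
      have h3 := takeUntilPrefix (P b) hab
      rw [h2] at h3
      exact h3
    have htrans : ∀ {a b c' : V}, a ∈ s b → b ∈ s c' → a ∈ s c' :=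
      fun hab hbc => (hpre _ _ hbc).subset hab
    have hanti : ∀ {a b : V}, a ∈ s b → b ∈ s a → a = b := by
      intro a b h1 h2
      have e : s a = s b := (hpre a b h1).eq_of_length
        (le_antisymm (hpre a b h1).length_le (hpre b a h2).length_le)
      have h3 : (P a).reverse.support = (P b).reverse.support := by
        rw [Walk.support_reverse, Walk.support_reverse]
        exact congrArg List.reverse e
      rw [(P a).reverse.support_eq_cons, (P b).reverse.support_eq_cons] at h3
      injection h3 with h4 h5
    have hlin : ∀ {a b c' : V}, a ∈ s c' → b ∈ s c' → a ∈ s b ∨ b ∈ s a := by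
      intro a b c' h1 h2
      rcases List.prefix_or_prefix_of_prefix (hpre a c' h1) (hpre b c' h2) with h | h
      · exact Or.inl (h.subset (hmem_self a))
      · exact Or.inr (h.subset (hmem_self b))
    have hconcat : ∀ {a b : V}, T.Adj a b → a ∉ s b → s a = s b ++ [a] := by
      intro a b hadj hna
      have h1 : ((P b).concat hadj.symm).IsPath := isPathConcat (hP b) hadj.symm hna
      have h2 := hPu a _ h1
      have : s a = ((P b).concat hadj.symm).support := by rw [h2]
      rw [this, Walk.support_concat]
    have hadjcomp : ∀ {a b : V}, T.Adj a b → a ∈ s b ∨ b ∈ s a := by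
      intro a b hadj
      by_cases hm : a ∈ s b
      · exact Or.inl hm
      · right; rw [hconcat hadj hm]; exact List.mem_append_left _ (hmem_self b)
    have hcomp : ∀ {a b : V}, G.Adj a b → a ∈ s b ∨ b ∈ s a := by
      intro a b hab
      by_cases hT' : T.Adj a b
      · exact hadjcomp hT'
      · rcases hback a b hab hT' with h | h
        · exact Or.inl (h (P b) (hP b))
        · exact Or.inr (h (P a) (hP a))
    have hcover : ∀ a b : V, G.Adj a b → ¬ T.Adj a b → b ∈ s u → u ∈ s a →
        CoveredByBackEdge G T u := by
      intro a b hGab hnT hbu hua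
      refine ⟨a, b, hGab, hnT, ?_⟩
      intro q hq
      have hbsa : b ∈ s a := htrans hbu hua
      have hdpath : ((P a).dropUntil b hbsa).IsPath := (hP a).dropUntil hbsa
      have hqe : q = ((P a).dropUntil b hbsa).reverse :=
        (hT.existsUnique_path a b).unique hq hdpath.reverse
      rw [hqe, Walk.support_reverse, List.mem_reverse]
      by_cases hub : u ∈ s b
      · have hub' : u = b := hanti hub hbu
        rw [hub']
        exact Walk.start_mem_support _
      · have hsplit : (P a).support =
            ((P a).takeUntil b hbsa).support ++ ((P a).dropUntil b hbsa).support.tail := by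
          rw [← Walk.support_append, Walk.take_spec]
        have htk : ((P a).takeUntil b hbsa).support = s b := by
          rw [hPu b _ ((hP a).takeUntil hbsa)]
        have hua' : u ∈ s b ++ ((P a).dropUntil b hbsa).support.tail := by
          rw [← htk, ← hsplit]
          exact hua
        rcases List.mem_append.mp hua' with h | h
        · exact absurd h hub
        · rw [((P a).dropUntil b hbsa).support_eq_cons]
          exact List.mem_cons_of_mem _ h
    have key : ∀ (x y : V) (w : G.Walk x y), T.Adj u x → u ∈ s x → x ∉ s y →
        u ∉ w.support → CoveredByBackEdge G T u := by
      intro x y w hTux husx hxny huw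
      have hxu : x ∉ s u := fun h => hTux.ne (hanti husx h)
      have hsx : s x = s u ++ [x] := hconcat hTux.symm hxu
      obtain ⟨d, hd, hdS, hdnS⟩ := w.exists_boundary_dart {v | x ∈ s v} (hmem_self x) hxny
      have hxa : x ∈ s d.fst := hdS
      have hbnx : x ∉ s d.snd := hdnS
      have hau : d.fst ≠ u := fun h => huw (h ▸ w.dart_fst_mem_support_of_mem_darts hd)
      have hbu : d.snd ≠ u := fun h => huw (h ▸ w.dart_snd_mem_support_of_mem_darts hd)
      have hua : u ∈ s d.fst := htrans husx hxa
      rcases hcomp d.adj with h | h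
      · exact absurd (htrans hxa h) hbnx
      · have hbx : d.snd ∈ s x := by
          rcases hlin h hxa with h' | h'
          · exact h'
          · exact absurd h' hbnx
        have hbsu : d.snd ∈ s u := by
          rw [hsx] at hbx
          rcases List.mem_append.mp hbx with h' | h'
          · exact h'
          · simp at h'
            exact absurd (by rw [h']; exact hmem_self x) hbnx
        have hnT : ¬ T.Adj d.fst d.snd := by
          intro hTab
          have hanb : d.fst ∉ s d.snd := fun h'' => hTab.ne (hanti h'' h)
          have hcc := hconcat hTab hanb
          rw [hcc] at hua
          rcases List.mem_append.mp hua with h' | h'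
          · exact hbu (hanti h' hbsu).symm
          · simp at h'
            exact hau h'.symm
        exact hcover d.fst d.snd d.adj hnT hbsu hua
    rcases hx : c.rotate u huc with _ | @⟨_, x, _, hux, p⟩
    · exact absurd hx (hc.rotate huc).ne_nil
    · have hc2 := hc.rotate huc
      rw [hx, Walk.cons_isCycle_iff] at hc2
      obtain ⟨hp, -⟩ := hc2
      have hlen3 : 3 ≤ p.length + 1 := by
        have := (hc.rotate huc).three_le_length
        rw [hx] at this
        simpa using this
      obtain ⟨y, huy, q, hq'⟩ := Walk.exists_eq_cons_of_ne hux.ne p.reverse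
      have hqq : q.IsPath ∧ u ∉ q.support := by
        have := hp.reverse
        rw [hq', Walk.cons_isPath_iff] at this
        exact this
      have hxy : x ≠ y := by
        intro hxyEq
        subst hxyEq
        rcases q with _ | ⟨h', q'⟩
        · have := congrArg Walk.length hq'
          simp [Walk.length_reverse] at this
          omega
        · have hpath := hqq.1
          rw [Walk.cons_isPath_iff] at hpath
          exact hpath.2 q'.end_mem_support
      by_cases hTx : T.Adj u x
      · by_cases hTy : T.Adj u y
        · rcases hadjcomp hTx with husx | hxsu
          · refine key x y q.reverse hTx husx ?_ ?_
            · intro hxsy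
              rcases hadjcomp hTy with husy | hysu
              · have hyu : y ∉ s u := fun h => hTy.ne (hanti husy h)
                have hsy : s y = s u ++ [y] := hconcat hTy.symm hyu
                rw [hsy] at hxsy
                rcases List.mem_append.mp hxsy with h' | h'
                · exact hTx.ne (hanti husx h')
                · simp at h'
                  exact hxy h'
              · exact hTx.ne (hanti husx (htrans hxsy hysu))
            · rw [Walk.support_reverse, List.mem_reverse]
              exact hqq.2
          · rcases hadjcomp hTy with husy | hysu
            · refine key y x q hTy husy ?_ hqq.2
              intro hysx
              exact hTy.ne (hanti husy (htrans hysx hxsu))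
            · have hux' : u ∉ s x := fun h => hTx.ne (hanti h hxsu)
              have hsu1 : s u = s x ++ [u] := hconcat hTx hux'
              have huy' : u ∉ s y := fun h => hTy.ne (hanti h hysu)
              have hsu2 : s u = s y ++ [u] := hconcat hTy huy'
              have hxy' : s x = s y := List.append_cancel_right (hsu1.symm.trans hsu2)
              have h1' : x ∈ s y := by rw [← hxy']; exact hmem_self x
              have h2' : y ∈ s x := by rw [hxy']; exact hmem_self y
              exact absurd (hanti h1' h2') hxy
        · exact ⟨u, y, huy, hTy, fun p' _ => p'.start_mem_support⟩
      · exact ⟨u, x, hux, hTx, fun p' _ => p'.start_mem_support⟩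
  · intro h
    obtain ⟨pt, hptr, h1, h2, h3⟩ := dfs_exists G hG u
    set T : SimpleGraph V :=
      { Adj := fun a b => pt b = pt a ++ [b] ∨ pt a = pt b ++ [a]
        symm := ⟨fun a b hab => hab.symm⟩
        loopless := ⟨fun a hab => by
          have hx : pt a = pt a ++ [a] := by rcases hab with hab | hab <;> exact hab
          have := congrArg List.length hx
          simp at this⟩ } with hT_def
    have hTadj : ∀ a b : V, T.Adj a b ↔ (pt b = pt a ++ [b] ∨ pt a = pt b ++ [a]) :=
      fun a b => Iff.rfl
    have hparent : ∀ a b : V, pt b = pt a ++ [b] → G.Adj a b := by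
      intro a b hab
      have hbr : b ≠ u := by
        rintro rfl
        rw [hptr] at hab
        have hlen := congrArg List.length hab
        simp at hlen
        have := (h1 a).2
        rw [hlen] at this
        simp at this
      obtain ⟨w, hwv, heq⟩ := h2 b hbr
      have haw : pt a = pt w := List.append_cancel_right (hab.symm.trans heq)
      have : a = w := by
        have h1a := (h1 a).2
        have h1w := (h1 w).2
        rw [haw, h1w] at h1a
        exact (Option.some_injective _ h1a).symm
      exact this ▸ hwv
    have hle : T ≤ G := by
      intro a b hab
      rcases (hTadj a b).mp hab with hab' | hab'
      · exact hparent a b hab'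
      · exact (hparent b a hab').symm
    have hwalk : ∀ (n : ℕ) (v : V), (pt v).length ≤ n → ∃ p : T.Walk u v, p.support = pt v := by
      intro n
      induction n with
      | zero =>
        intro v hv
        exfalso
        have hnil : pt v = [] := List.length_eq_zero_iff.mp (Nat.le_zero.mp hv)
        have := (h1 v).2
        rw [hnil] at this
        simp at this
      | succ m ih =>
        intro v hv
        by_cases hvu : v = u
        · subst hvu
          exact ⟨Walk.nil, by simp [hptr]⟩
        · obtain ⟨w, hwv, heq⟩ := h2 v hvu
          have hlen : (pt w).length ≤ m := by
            have := congrArg List.length heq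
            simp at this
            omega
          obtain ⟨p, hp⟩ := ih w hlen
          have hTwv : T.Adj w v := (hTadj w v).mpr (Or.inl heq)
          exact ⟨p.concat hTwv, by rw [Walk.support_concat, hp, heq]⟩
    have hwalkAll : ∀ v : V, ∃ p : T.Walk u v, p.support = pt v := fun v => hwalk _ v le_rfl
    have hconn : T.Connected := by
      rw [connected_iff]
      refine ⟨fun a b => ?_, ⟨u⟩⟩
      obtain ⟨pa, -⟩ := hwalkAll a
      obtain ⟨pb, -⟩ := hwalkAll b
      exact (Walk.reachable pa).symm.trans (Walk.reachable pb)
    have hlast : ∀ {a b : V}, pt a = pt b → a = b := by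
      intro a b hab
      have h1a := (h1 a).2
      rw [hab, (h1 b).2] at h1a
      exact (Option.some_injective _ h1a).symm
    have hacyc : T.IsAcyclic := by
      intro v0 c hc
      obtain ⟨m, hmS, hmax⟩ := (c.support.toFinset).exists_max_image
        (fun v => (pt v).length) ⟨v0, by simp [c.start_mem_support]⟩
      have hm : m ∈ c.support := List.mem_toFinset.mp hmS
      have hmax' : ∀ w ∈ c.support, (pt w).length ≤ (pt m).length := by
        intro w hw
        exact hmax w (List.mem_toFinset.mpr hw)
      have hrotmem : ∀ z, z ∈ (c.rotate m hm).support → z ∈ c.support := by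
        intro z hz
        rw [(c.rotate m hm).support_eq_cons] at hz
        rcases List.mem_cons.mp hz with rfl | hz
        · exact hm
        · rw [c.support_eq_cons]
          exact List.mem_cons_of_mem _ ((Walk.support_rotate c m hm).mem_iff.mp hz)
      have hc' := hc.rotate hm
      rcases hx : c.rotate m hm with _ | @⟨_, x, _, hmx, p⟩
      · exact hc'.ne_nil hx
      · rw [hx, Walk.cons_isCycle_iff] at hc'
        obtain ⟨hp, hedge⟩ := hc'
        have hlen3 : 3 ≤ p.length + 1 := by
          have := (hc.rotate hm).three_le_length
          rw [hx] at this
          simpa using this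
        obtain ⟨y, hmy, q, hq'⟩ := Walk.exists_eq_cons_of_ne hmx.ne p.reverse
        have hqpath : q.IsPath ∧ m ∉ q.support := by
          have := hp.reverse
          rw [hq', Walk.cons_isPath_iff] at this
          exact this
        have hxy : x ≠ y := by
          intro hxyEq
          subst hxyEq
          rcases q with _ | ⟨h', q'⟩
          · have := congrArg Walk.length hq'
            simp [Walk.length_reverse] at this
            omega
          · have hpath := hqpath.1
            rw [Walk.cons_isPath_iff] at hpath
            exact hpath.2 q'.end_mem_support
        -- both x and y are on the cycle
        have hxc : x ∈ c.support := hrotmem x (by rw [hx]; simp [p.start_mem_support])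
        have hyc : y ∈ c.support := by
          apply hrotmem
          rw [hx]
          have : y ∈ p.support := by
            rw [← List.mem_reverse, ← Walk.support_reverse, hq']
            simp [q.start_mem_support]
          simp [this]
        have hpx : pt m = pt x ++ [m] := by
          rcases (hTadj m x).mp hmx with h' | h'
          · exfalso
            have := hmax' x hxc
            have hlx := congrArg List.length h'
            simp at hlx
            omega
          · exact h'
        have hpy : pt m = pt y ++ [m] := by
          rcases (hTadj m y).mp hmy with h' | h'
          · exfalso
            have := hmax' y hyc
            have hly := congrArg List.length h'
            simp at hly
            omega
          · exact h'
        exact hxy (hlast (List.append_cancel_right (hpx.symm.trans hpy)))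
    have hTree : T.IsTree := ⟨hconn, hacyc⟩
    have hanc : ∀ a b : V, pt a <+: pt b → IsAncestor T u a b := by
      intro a b hpre p hp
      obtain ⟨pb, hpb⟩ := hwalkAll b
      have hpbpath : pb.IsPath := by
        rw [Walk.isPath_def, hpb]
        exact (h1 b).1
      have hppb : p = pb := (hTree.existsUnique_path u b).unique hp hpbpath
      rw [hppb, hpb]
      exact hpre.subset (memOfGetLast? (h1 a).2)
    have hdfs : IsDFSTree G T u :=
      ⟨hle, hTree, fun a b hab hnab => (h3 a b hab).imp (hanc a b) (hanc b a)⟩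
    obtain ⟨a, b, hab, hnab, hon⟩ := h T u hdfs
    obtain ⟨p, hp, -⟩ := hTree.existsUnique_path a b
    have hup : u ∈ p.support := hon p hp
    have hmapsupp : (p.mapLe hle).support = p.support := by
      have hid : ⇑(Hom.ofLE hle) = id := rfl
      simp [Walk.mapLe, Walk.support_map, hid]
    have hmapedges : (p.mapLe hle).edges = p.edges := by
      have hid : ⇑(Hom.ofLE hle) = id := rfl
      simp [Walk.mapLe, Walk.edges_map, hid, Sym2.map_id']
    refine ⟨b, Walk.cons hab.symm (p.mapLe hle), ?_, ?_⟩
    · rw [Walk.cons_isCycle_iff]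
      refine ⟨(Walk.mapLe_isPath hle).mpr hp, fun he => ?_⟩
      rw [hmapedges] at he
      exact hnab (Walk.adj_of_mem_edges p he).symm
    · rw [Walk.support_cons, hmapsupp]
      exact List.mem_cons_of_mem _ hup
end

section
/- Let T be a DFS spanning tree of a connected undirected graph G. A tree edge {u,w} of T (with u the parent of w) is a bridge of G if and only if no back edge of G covers it, i.e., no non-tree edge has one endpoint in the subtree rooted at w and the other endpoint an ancestor of u. -/
open SimpleGraph

def IsStrictAncestor {V : Type*} (T : SimpleGraph V) (r w u : V) : Prop :=
  IsAncestor T r w u ∧ w ≠ u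

set_option linter.unusedSectionVars false
section Aux

variable {V : Type*} [DecidableEq V] {T : SimpleGraph V} {r : V}

/-- canonical path -/
noncomputable def canP (hT : T.IsTree) (v w : V) : T.Walk v w :=
  (hT.existsUnique_path v w).exists.choose

lemma canP_isPath (hT : T.IsTree) (v w : V) : (canP hT v w).IsPath :=
  (hT.existsUnique_path v w).exists.choose_spec

lemma eq_canP (hT : T.IsTree) {v w : V} {p : T.Walk v w} (hp : p.IsPath) :
    p = canP hT v w :=
  (hT.existsUnique_path v w).unique hp (canP_isPath hT v w)

lemma isAncestor_iff_mem (hT : T.IsTree) {w u : V} :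
    IsAncestor T r w u ↔ w ∈ (canP hT r u).support := by
  constructor
  · exact fun h => h _ (canP_isPath hT r u)
  · intro h p hp
    rw [eq_canP hT hp]; exact h

lemma isAncestor_refl (w : V) : IsAncestor T r w w :=
  fun p _ => p.end_mem_support

lemma isAncestor_trans {a b c : V} (hab : IsAncestor T r a b) (hbc : IsAncestor T r b c) :
    IsAncestor T r a c := by
  intro p hp
  have hb : b ∈ p.support := hbc p hp
  have : a ∈ (p.takeUntil b hb).support := hab _ (hp.takeUntil hb)
  exact p.support_takeUntil_subset hb this

/-- antisymmetry-ish: a strict ancestor's descendant is not its ancestor -/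
lemma not_isAncestor_of_strict (hT : T.IsTree) {u w : V}
    (h : IsStrictAncestor T r u w) : ¬ IsAncestor T r w u := by
  rintro hwu
  obtain ⟨huw, hne⟩ := h
  set p := canP hT r u with hp
  have hpp := canP_isPath hT r u
  have hw : w ∈ p.support := (isAncestor_iff_mem hT).1 hwu
  have htp : (p.takeUntil w hw).IsPath := hpp.takeUntil hw
  have hu : u ∈ (p.takeUntil w hw).support := huw _ htp
  have hsplit := p.take_spec hw
  have hnodup : p.support.Nodup := hpp.support_nodup
  rw [← hsplit, Walk.support_append, List.nodup_append] at hnodup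
  have hdisj := hnodup.2.2
  have hu' : u ∈ ((p.dropUntil w hw).support).tail := by
    have := (p.dropUntil w hw).end_mem_support
    rw [(p.dropUntil w hw).support_eq_cons] at this
    rcases List.mem_cons.1 this with h | h
    · exact absurd h hne
    · exact h
  exact hdisj _ hu _ hu' rfl

/-- every vertex on the `dropUntil` part is a descendant of `w` -/
lemma isAncestor_of_mem_dropUntil (hT : T.IsTree) {y w v : V} {p : T.Walk r y}
    (hp : p.IsPath) (hw : w ∈ p.support) (hv : v ∈ (p.dropUntil w hw).support) :
    IsAncestor T r w v := by
  set q1 := p.takeUntil w hw with hq1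
  set q2 := p.dropUntil w hw with hq2
  set q2' := q2.takeUntil v hv with hq2'
  have hq2p : q2.IsPath := hp.dropUntil hw
  have hq2'p : q2'.IsPath := hq2p.takeUntil hv
  have hnodup : p.support.Nodup := hp.support_nodup
  rw [← p.take_spec hw, Walk.support_append, List.nodup_append] at hnodup
  have hdisj := hnodup.2.2
  have key : ∀ z ∈ q2'.support.tail, z ∈ q2.support.tail := by
    intro z hz
    have hz1 : z ∈ q2'.support := List.mem_of_mem_tail hz
    have hzw : z ≠ w := by
      intro h
      subst h
      have := hq2'p.support_nodup
      rw [q2'.support_eq_cons] at this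
      exact (List.nodup_cons.1 this).1 hz
    have : z ∈ q2.support := q2.support_takeUntil_subset hv hz1
    rw [q2.support_eq_cons] at this
    rcases List.mem_cons.1 this with h | h
    · exact absurd h hzw
    · exact h
  have hqpath : (q1.append q2').IsPath := by
    rw [Walk.isPath_def, Walk.support_append, List.nodup_append]
    refine ⟨hnodup.1, hq2'p.support_nodup.tail, ?_⟩
    intro z hz1 b hz2 hzb
    exact hdisj _ hz1 _ (key b hz2) hzb
  intro p' hp'
  have : p' = q1.append q2' := by
    rw [eq_canP hT hp', eq_canP hT hqpath]
  rw [this, Walk.mem_support_append_iff]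
  exact Or.inl q1.end_mem_support

/-- if `T.Adj x y` and `y` is not an ancestor of `x`, then the canonical path to `y`
extends the one to `x`. -/
lemma canP_concat (hT : T.IsTree) {x y : V} (hadj : T.Adj x y)
    (hny : ¬ IsAncestor T r y x) :
    canP hT r y = (canP hT r x).concat hadj := by
  have hy : y ∉ (canP hT r x).support := by
    intro h
    exact hny ((isAncestor_iff_mem hT).2 h)
  have hpath : ((canP hT r x).concat hadj).IsPath := by
    rw [Walk.isPath_def, Walk.support_concat, List.nodup_append]
    exact ⟨(canP_isPath hT r x).support_nodup, List.nodup_singleton y,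
      fun z hz b hb hzb => hy (by rw [List.mem_singleton.1 hb] at hzb; rwa [hzb] at hz)⟩
  exact (eq_canP hT hpath).symm

lemma support_mapLe {G G' : SimpleGraph V} (h : G ≤ G') {a b : V} (p : G.Walk a b) :
    (p.mapLe h).support = p.support := by
  induction p <;> simp [*]

lemma edges_mapLe {G G' : SimpleGraph V} (h : G ≤ G') {a b : V} (p : G.Walk a b) :
    (p.mapLe h).edges = p.edges := by
  induction p <;> simp [*]

lemma exists_crossing_edge {G : SimpleGraph V} (S : V → Prop) {c d : V} (p : G.Walk c d)
    (hc : ¬ S c) (hd : S d) : ∃ x y, G.Adj x y ∧ ¬ S x ∧ S y ∧ s(x, y) ∈ p.edges := by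
  induction p with
  | nil => exact absurd hd hc
  | @cons c b d h q ih =>
    by_cases hS : S b
    · exact ⟨c, b, h, hc, hS, by simp⟩
    · obtain ⟨x, y, h1, h2, h3, h4⟩ := ih hS hd
      exact ⟨x, y, h1, h2, h3, by simp [h4]⟩

lemma tree_edge_cross (hT : T.IsTree) {u w x y : V} (huw : T.Adj u w)
    (hparent : IsStrictAncestor T r u w) (hadj : T.Adj x y)
    (hnx : ¬ IsAncestor T r w x) (hy : IsAncestor T r w y) : x = u ∧ y = w := by
  have hnyx : ¬ IsAncestor T r y x := fun h => hnx (isAncestor_trans hy h)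
  have hPy : canP hT r y = (canP hT r x).concat hadj := canP_concat hT hadj hnyx
  have hwmem : w ∈ (canP hT r y).support := (isAncestor_iff_mem hT).1 hy
  rw [hPy, Walk.support_concat, List.mem_append] at hwmem
  have hyw : y = w := by
    rcases hwmem with h | h
    · exact absurd ((isAncestor_iff_mem hT).2 h) hnx
    · exact (List.mem_singleton.1 h).symm
  subst hyw
  have hnwu : ¬ IsAncestor T r y u := not_isAncestor_of_strict hT hparent
  have hPw : canP hT r y = (canP hT r u).concat huw := canP_concat hT huw hnwu
  obtain ⟨hv, -⟩ := Walk.concat_inj (hPy.symm.trans hPw)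
  exact ⟨hv, rfl⟩

lemma anc_of_cross (hT : T.IsTree) {u w x y : V} (huw : T.Adj u w)
    (hparent : IsStrictAncestor T r u w) (hxy : IsAncestor T r x y)
    (hy : IsAncestor T r w y) (hnx : ¬ IsAncestor T r w x) : IsAncestor T r x u := by
  have hwmem : w ∈ (canP hT r y).support := (isAncestor_iff_mem hT).1 hy
  have hxmem : x ∈ (canP hT r y).support := (isAncestor_iff_mem hT).1 hxy
  have hxdrop : x ∉ ((canP hT r y).dropUntil w hwmem).support := fun h =>
    hnx (isAncestor_of_mem_dropUntil hT (canP_isPath hT r y) hwmem h)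
  have hxtake : x ∈ ((canP hT r y).takeUntil w hwmem).support := by
    rw [← (canP hT r y).take_spec hwmem, Walk.mem_support_append_iff] at hxmem
    rcases hxmem with h | h
    · exact h
    · exact absurd h hxdrop
  have hxw : IsAncestor T r x w := by
    rw [isAncestor_iff_mem hT,
      ← eq_canP hT ((canP_isPath hT r y).takeUntil hwmem)]
    exact hxtake
  have hnww : ¬ IsAncestor T r w u := not_isAncestor_of_strict hT hparent
  have hPw : canP hT r w = (canP hT r u).concat huw := canP_concat hT huw hnww
  have hxmem' : x ∈ (canP hT r w).support := (isAncestor_iff_mem hT).1 hxw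
  rw [hPw, Walk.support_concat, List.mem_append] at hxmem'
  rcases hxmem' with h | h
  · exact (isAncestor_iff_mem hT).2 h
  · exact absurd (isAncestor_refl w) (List.mem_singleton.1 h ▸ hnx)

end Aux

/-- A tree edge `{u, w}` of a DFS spanning tree (with `u` the parent of `w`) is a bridge
of `G` iff no non-tree edge has one endpoint in the subtree rooted at `w` and the other
endpoint an ancestor of `u`. -/
theorem stmt7 {V : Type*} [Fintype V] (G T : SimpleGraph V) (r : V)
    (hG : G.Connected) (hT : IsDFSTree G T r)
    (u w : V) (huw : T.Adj u w) (hparent : IsStrictAncestor T r u w) :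
    G.IsBridge s(u, w) ↔
      ¬ ∃ x a, G.Adj x a ∧ ¬ T.Adj x a ∧ IsAncestor T r w x ∧ IsAncestor T r a u := by
  classical
  obtain ⟨hle, htree, hdfs⟩ := hT
  have hnwu : ¬ IsAncestor T r w u := not_isAncestor_of_strict htree hparent
  rw [isBridge_iff_adj_and_forall_walk_mem_edges]
  constructor
  · rintro hall ⟨x, a, hGxa, hnT, hwx, hau⟩
    have ha : a ∈ (canP htree r u).support := (isAncestor_iff_mem htree).1 hau
    have hwx' : w ∈ (canP htree r x).support := (isAncestor_iff_mem htree).1 hwx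
    set q1 : T.Walk u a := ((canP htree r u).dropUntil a ha).reverse with hq1
    set q2 : T.Walk x w := ((canP htree r x).dropUntil w hwx').reverse with hq2
    have hwq1 : w ∉ q1.support := by
      rw [hq1, Walk.support_reverse, List.mem_reverse]
      intro h
      exact hnwu ((isAncestor_iff_mem htree).2 ((canP htree r u).support_dropUntil_subset ha h))
    have huq2 : u ∉ q2.support := by
      rw [hq2, Walk.support_reverse, List.mem_reverse]
      intro h
      have hnodup := (canP_isPath htree r x).support_nodup
      rw [← (canP htree r x).take_spec hwx', Walk.support_append, List.nodup_append] at hnodup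
      have hu_take : u ∈ ((canP htree r x).takeUntil w hwx').support :=
        hparent.1 _ ((canP_isPath htree r x).takeUntil hwx')
      have hu_tail : u ∈ ((canP htree r x).dropUntil w hwx').support.tail := by
        rw [Walk.support_eq_cons] at h
        rcases List.mem_cons.1 h with h' | h'
        · exact absurd h' hparent.2
        · exact h'
      exact hnodup.2.2 _ hu_take _ hu_tail rfl
    have hmem := hall ((q1.mapLe hle).append (Walk.cons hGxa.symm (q2.mapLe hle)))
    rw [Walk.edges_append, List.mem_append] at hmem
    rcases hmem with h | h
    · have : w ∈ (q1.mapLe hle).support := Walk.snd_mem_support_of_mem_edges _ h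
      rw [support_mapLe] at this
      exact hwq1 this
    · rw [Walk.edges_cons, List.mem_cons] at h
      rcases h with h | h
      · rw [Sym2.eq_iff] at h
        rcases h with ⟨rfl, rfl⟩ | ⟨rfl, rfl⟩
        · exact hnT huw.symm
        · exact hnwu hau
      · have : u ∈ (q2.mapLe hle).support := Walk.fst_mem_support_of_mem_edges _ h
        rw [support_mapLe] at this
        exact huq2 this
  · intro hno
    refine fun p => ?_
    by_contra hne
    obtain ⟨x, y, hxy, hnx, hy, hmemxy⟩ :=
      exists_crossing_edge (fun v => IsAncestor T r w v) p hnwu (isAncestor_refl w)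
    by_cases hadj : T.Adj x y
    · obtain ⟨rfl, rfl⟩ := tree_edge_cross htree huw hparent hadj hnx hy
      exact hne hmemxy
    · rcases hdfs x y hxy hadj with hxay | hyax
      · have hxu : IsAncestor T r x u := anc_of_cross htree huw hparent hxay hy hnx
        exact hno ⟨y, x, hxy.symm, fun h => hadj h.symm, hy, hxu⟩
      · exact hnx (isAncestor_trans hy hyax)
end
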